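/- arXiv:2002.09028 — 2 statements merged into one kernel-verified Lean document; each statement's English description precedes it below -/
import Mathlib

section
/- Let G be a finite simple graph, r, c, k natural numbers with c ≥ 1, and L ⊆ V(G) a constraint core for (r,c)-domination, i.e. every set D ⊆ V(G) with |N^r_G[v] ∩ D| ≥ c for all v ∈ L also satisfies |N^r_G[v] ∩ D| ≥ c for all v ∈ V(G). Let Ĝ be an induced subgraph of G with L ⊆ V(Ĝ) such that: (1) for all u, v ∈ L and all d ≤ r, u is within distance d of v in G if and only if u is within distance d of v in Ĝ; and (2) for every function ν : L → {1,…,r} ∪ {∞}, if exactly p vertices x ∈ V(G) ∖ L satisfy π^r_{G,L}[x] = ν, then at least min(c,p) vertices x' ∈ V(Ĝ) ∖ L satisfy π^r_{Ĝ,L}[x'] = ν. Then G has an (r,c)-dominating set of size at most k if and only if there is a set D̂ ⊆ V(Ĝ) of size at most k with |N^r_{Ĝ}[v] ∩ D̂| ≥ c for every v ∈ L. -/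
/-- The closed `d`-neighbourhood of `v` in the subgraph of `G` induced on `S`:
vertices reachable from `v` by a walk of length at most `d` all of whose vertices lie
in `S`.  With `S = Set.univ` this is the closed `d`-neighbourhood in `G` itself. -/
def ballIn {V : Type*} (G : SimpleGraph V) (S : Set V) (d : ℕ) (v : V) : Set V :=
  {u : V | ∃ w : G.Walk u v, w.length ≤ d ∧ ∀ x ∈ w.support, x ∈ S}

/-- The `r`-projection profile `π^r_{H,X}[u]` evaluated at `v`, where `H` is the
subgraph of `G` induced on `S`: the minimum length of an `X`-avoiding walk from `u`
to `v` inside `S` if that minimum is at most `r`, and `∞` otherwise.  (`X`-avoiding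
means no internal vertex lies in `X`.)  With `S = Set.univ` this is the profile in
`G` itself. -/
noncomputable def profileIn {V : Type*} (G : SimpleGraph V) (S X : Set V) (r : ℕ)
    (u v : V) : ℕ∞ :=
  let d := sInf {n : ℕ∞ | ∃ w : G.Walk u v, (∀ x ∈ w.support, x ∈ S) ∧
    (∀ x ∈ w.support.tail.dropLast, x ∉ X) ∧ (w.length : ℕ∞) = n}
  if d ≤ (r : ℕ∞) then d else ⊤


private lemma mem_dropLast_cons' {α : Type*} {z y : α} {t : List α}
    (h : z ∈ (y :: t).dropLast) : z = y ∨ z ∈ t.dropLast := by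
  cases t with
  | nil => simp at h
  | cons c t' =>
    rw [List.dropLast_cons₂] at h
    rcases List.mem_cons.mp h with h | h
    · exact Or.inl h
    · exact Or.inr h

private lemma walk_split {V : Type*} {G : SimpleGraph V} (L S : Set V) :
    ∀ {x v : V} (w : G.Walk x v), x ∉ L → v ∈ L → (∀ y ∈ w.support, y ∈ S) →
    ∃ u ∈ L, ∃ (w1 : G.Walk x u) (w2 : G.Walk u v),
      w1.length + w2.length ≤ w.length ∧
      (∀ y ∈ w1.support, y ∈ S) ∧ (∀ y ∈ w1.support.tail.dropLast, y ∉ L) ∧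
      (∀ y ∈ w2.support, y ∈ S) := by
  intro x v w
  induction w with
  | nil => intro hx hv _; exact absurd hv hx
  | @cons x y v h w' ih =>
    intro hx hv hS
    by_cases hy : y ∈ L
    · refine ⟨y, hy, SimpleGraph.Walk.cons h SimpleGraph.Walk.nil, w', ?_, ?_, ?_, ?_⟩
      · simp only [SimpleGraph.Walk.length_cons, SimpleGraph.Walk.length_nil]
        omega
      · intro z hz
        have hzx : z = x ∨ z = y := by
          simpa using hz
        rcases hzx with h' | h'
        · rw [h']; exact hS x (by simp)
        · rw [h']
          exact hS y (by rw [SimpleGraph.Walk.support_cons]; simp [w'.start_mem_support])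
      · intro z hz
        simp [SimpleGraph.Walk.support_cons, SimpleGraph.Walk.support_nil] at hz
      · intro z hz
        exact hS z (by simp [SimpleGraph.Walk.support_cons, hz])
    · obtain ⟨u, hu, w1, w2, hlen, hS1, hL1, hS2⟩ :=
        ih hy hv (fun z hz => hS z (by simp [SimpleGraph.Walk.support_cons, hz]))
      refine ⟨u, hu, SimpleGraph.Walk.cons h w1, w2, ?_, ?_, ?_, hS2⟩
      · simp only [SimpleGraph.Walk.length_cons]
        omega
      · intro z hz
        simp only [SimpleGraph.Walk.support_cons] at hz
        rcases List.mem_cons.mp hz with h' | hz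
        · rw [h']; exact hS x (by simp)
        · exact hS1 z hz
      · intro z hz
        simp only [SimpleGraph.Walk.support_cons, List.tail_cons] at hz
        rw [w1.support_eq_cons] at hz
        rcases mem_dropLast_cons' hz with h' | hz
        · rw [h']; exact hy
        · exact hL1 z (by rw [w1.support_eq_cons]; simpa using hz)

private lemma profileIn_le_iff {V : Type*} {G : SimpleGraph V} (S X : Set V) (r : ℕ)
    (x u : V) (a : ℕ) (ha : a ≤ r) :
    profileIn G S X r x u ≤ (a : ℕ∞) ↔
      ∃ w : G.Walk x u, (∀ y ∈ w.support, y ∈ S) ∧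
        (∀ y ∈ w.support.tail.dropLast, y ∉ X) ∧ w.length ≤ a := by
  unfold profileIn
  set T : Set ℕ∞ := {n | ∃ w : G.Walk x u, (∀ y ∈ w.support, y ∈ S) ∧
    (∀ y ∈ w.support.tail.dropLast, y ∉ X) ∧ (w.length : ℕ∞) = n} with hT
  constructor
  · intro h
    by_cases hle : sInf T ≤ (r : ℕ∞)
    · rw [if_pos hle] at h
      have h' : sInf T < (a : ℕ∞) + 1 :=
        lt_of_le_of_lt h (by exact_mod_cast Nat.lt_succ_self a)
      obtain ⟨t, htT, hlt⟩ := sInf_lt_iff.mp h'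
      obtain ⟨w, hwS, hwX, hwl⟩ := htT
      refine ⟨w, hwS, hwX, ?_⟩
      rw [← hwl] at hlt
      exact_mod_cast Nat.lt_succ_iff.mp (by exact_mod_cast hlt)
    · rw [if_neg hle] at h
      rw [top_le_iff] at h
      exact absurd h (by simp)
  · rintro ⟨w, hwS, hwX, hwl⟩
    have hmem : (w.length : ℕ∞) ∈ T := ⟨w, hwS, hwX, rfl⟩
    have h1 : sInf T ≤ (a : ℕ∞) := le_trans (sInf_le hmem) (by exact_mod_cast hwl)
    rw [if_pos (h1.trans (by exact_mod_cast ha))]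
    exact h1

private lemma mem_ballIn_iff {V : Type*} {G : SimpleGraph V} (L S : Set V) (r : ℕ)
    {x v : V} (hx : x ∉ L) (hv : v ∈ L) :
    x ∈ ballIn G S r v ↔
      ∃ u ∈ L, ∃ a b : ℕ, a + b ≤ r ∧ profileIn G S L r x u ≤ (a : ℕ∞) ∧
        ∃ w : G.Walk u v, w.length ≤ b ∧ ∀ y ∈ w.support, y ∈ S := by
  constructor
  · rintro ⟨w, hlen, hS⟩
    obtain ⟨u, hu, w1, w2, hl, hS1, hL1, hS2⟩ := walk_split L S w hx hv hS
    refine ⟨u, hu, w1.length, w2.length, hl.trans hlen, ?_, w2, le_rfl, hS2⟩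
    exact (profileIn_le_iff S L r x u w1.length
      (by omega)).mpr ⟨w1, hS1, hL1, le_rfl⟩
  · rintro ⟨u, hu, a, b, hab, hprof, w2, hl2, hS2⟩
    obtain ⟨w1, hS1, _, hl1⟩ := (profileIn_le_iff S L r x u a (by omega)).mp hprof
    refine ⟨w1.append w2, ?_, ?_⟩
    · rw [SimpleGraph.Walk.length_append]; omega
    · intro y hy
      rw [SimpleGraph.Walk.support_append] at hy
      rcases List.mem_append.mp hy with hy | hy
      · exact hS1 y hy
      · exact hS2 y (List.mem_of_mem_tail hy)

/-- Let `L` be a constraint core for `(r,c)`-domination in `G` and let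
`Ĝ` be the subgraph of `G` induced on `S ⊇ L` such that (1) distances up to `r`
between vertices of `L` agree in `G` and `Ĝ`, and (2) every `r`-projection profile
onto `L` realized by `p` vertices of `V(G) ∖ L` is realized by at least `min c p`
vertices of `V(Ĝ) ∖ L` (i.e. `Ĝ` is an `(r,c)`-projection kernel of `(G,L)`).  Then
`G` has an `(r,c)`-dominating set of size at most `k` iff there is `D̂ ⊆ V(Ĝ)` of size
at most `k` with `|N^r_Ĝ[v] ∩ D̂| ≥ c` for every `v ∈ L`. -/
theorem rc_domination_projection_kernel {V : Type*} [Fintype V]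
    (G : SimpleGraph V) (r c k : ℕ) (hc : 1 ≤ c) (L S : Set V) (hLS : L ⊆ S)
    (hcore : ∀ D : Set V,
      (∀ v ∈ L, c ≤ (ballIn G Set.univ r v ∩ D).ncard) →
      ∀ v : V, c ≤ (ballIn G Set.univ r v ∩ D).ncard)
    (h1 : ∀ u ∈ L, ∀ v ∈ L, ∀ d ≤ r,
      ((∃ w : G.Walk u v, w.length ≤ d) ↔
       (∃ w : G.Walk u v, w.length ≤ d ∧ ∀ x ∈ w.support, x ∈ S)))
    (h2 : ∀ ν : V → ℕ∞,
      min c {x : V | x ∉ L ∧ ∀ v ∈ L, profileIn G Set.univ L r x v = ν v}.ncard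
        ≤ {x : V | x ∈ S ∧ x ∉ L ∧ ∀ v ∈ L, profileIn G S L r x v = ν v}.ncard) :
    (∃ D : Set V, D.ncard ≤ k ∧ ∀ v : V, c ≤ (ballIn G Set.univ r v ∩ D).ncard) ↔
    (∃ D : Set V, D ⊆ S ∧ D.ncard ≤ k ∧ ∀ v ∈ L, c ≤ (ballIn G S r v ∩ D).ncard) := by
  classical
  constructor
  · rintro ⟨D, hDk, hDdom⟩
    set Φ : V → (V → ℕ∞) :=
      fun x v => if v ∈ L then profileIn G Set.univ L r x v else 0 with hΦ
    set Df : Finset V := (Set.toFinite D).toFinset with hDfdef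
    set A : Finset V := Df.filter (fun y => ¬ y ∈ L) with hAdef
    set Profs : Finset (V → ℕ∞) := A.image Φ with hProfsdef
    set P : (V → ℕ∞) → Finset V := fun ν => A.filter (fun y => Φ y = ν) with hPdef
    set K : (V → ℕ∞) → Set V :=
      fun ν => {x | x ∈ S ∧ x ∉ L ∧ ∀ v ∈ L, profileIn G S L r x v = ν v} with hKdef
    -- choose the picked sets
    have hminK : ∀ ν : V → ℕ∞, min c (P ν).card ≤ (K ν).ncard := by
      intro ν
      have hsub : ((P ν : Finset V) : Set V) ⊆
          {x : V | x ∉ L ∧ ∀ v ∈ L, profileIn G Set.univ L r x v = ν v} := by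
        intro y hy
        obtain ⟨hyA, hyΦ⟩ := Finset.mem_filter.mp (Finset.mem_coe.mp hy)
        obtain ⟨-, hyL⟩ := Finset.mem_filter.mp hyA
        refine ⟨hyL, fun u hu => ?_⟩
        rw [← hyΦ]
        simp [hΦ, hu]
      have hle := Set.ncard_le_ncard hsub (Set.toFinite _)
      rw [Set.ncard_coe_finset] at hle
      exact le_trans (min_le_min le_rfl hle) (h2 ν)
    have hpick : ∀ ν : V → ℕ∞, ∃ t : Finset V, ↑t ⊆ K ν ∧ t.card = min c (P ν).card := by
      intro ν
      obtain ⟨t, ht, htc⟩ := Finset.exists_subset_card_eq (s := (Set.toFinite (K ν)).toFinset)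
        (n := min c (P ν).card)
        (by rw [← Set.ncard_eq_toFinset_card (K ν)]; exact hminK ν)
      refine ⟨t, ?_, htc⟩
      intro z hz
      have := ht hz
      simpa [hKdef] using this
    choose Pick hPickK hPickCard using hpick
    have hPickL : ∀ ν, ∀ z ∈ Pick ν, z ∉ L := fun ν z hz => (hPickK ν hz).2.1
    have hPickS : ∀ ν, ∀ z ∈ Pick ν, z ∈ S := fun ν z hz => (hPickK ν hz).1
    -- disjointness of picks for distinct profiles in Profs
    have hKdisj : ∀ ν ∈ Profs, ∀ ν' ∈ Profs, ν ≠ ν' → Disjoint (Pick ν) (Pick ν') := by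
      intro ν hν ν' hν' hne
      rw [Finset.disjoint_left]
      intro z hz hz'
      apply hne
      obtain ⟨a, -, ha⟩ := Finset.mem_image.mp hν
      obtain ⟨a', -, ha'⟩ := Finset.mem_image.mp hν'
      funext u
      by_cases hu : u ∈ L
      · rw [← (hPickK ν hz).2.2 u hu, ← (hPickK ν' hz').2.2 u hu]
      · rw [← ha, ← ha']
        simp [hΦ, hu]
    set Dhat : Finset V := Df.filter (fun y => y ∈ L) ∪ Profs.biUnion Pick with hDhatdef
    have hDfcard : Df.card = D.ncard := (Set.ncard_eq_toFinset_card D (Set.toFinite D)).symm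
    refine ⟨(Dhat : Set V), ?_, ?_, ?_⟩
    · -- subset of S
      intro z hz
      rcases Finset.mem_union.mp (Finset.mem_coe.mp hz) with hz' | hz'
      · exact hLS (Finset.mem_filter.mp hz').2
      · obtain ⟨ν, -, hzν⟩ := Finset.mem_biUnion.mp hz'
        exact hPickS ν z hzν
    · -- cardinality
      rw [Set.ncard_coe_finset]
      have hb1 : (Profs.biUnion Pick).card ≤ ∑ ν ∈ Profs, (Pick ν).card :=
        Finset.card_biUnion_le
      have hb2 : ∑ ν ∈ Profs, (Pick ν).card ≤ ∑ ν ∈ Profs, (P ν).card := by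
        apply Finset.sum_le_sum
        intro ν _
        rw [hPickCard]
        exact min_le_right _ _
      have hb3 : ∑ ν ∈ Profs, (P ν).card = A.card :=
        (Finset.card_eq_sum_card_image Φ A).symm
      have hb4 : (Df.filter (fun y => y ∈ L)).card + A.card = Df.card :=
        Finset.card_filter_add_card_filter_not _
      calc Dhat.card ≤ (Df.filter (fun y => y ∈ L)).card + (Profs.biUnion Pick).card :=
            Finset.card_union_le _ _
        _ ≤ (Df.filter (fun y => y ∈ L)).card + A.card := by omega
        _ = Df.card := hb4
        _ = D.ncard := hDfcard
        _ ≤ k := hDk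
    · -- domination of L
      intro v hv
      -- transfer lemmas
      have T1 : ∀ x ∈ L, x ∈ ballIn G Set.univ r v → x ∈ ballIn G S r v := by
        intro x hx hball
        obtain ⟨w, hl, -⟩ := hball
        obtain ⟨w', hl', hS'⟩ := (h1 x hx v hv r le_rfl).mp ⟨w, hl⟩
        exact ⟨w', hl', hS'⟩
      set Reach : (V → ℕ∞) → Prop :=
        fun ν => ∃ u ∈ L, ∃ a b : ℕ, a + b ≤ r ∧ ν u ≤ (a : ℕ∞) ∧
          ∃ w : G.Walk u v, w.length ≤ b with hReachdef
      have T2 : ∀ x, x ∉ L → (x ∈ ballIn G Set.univ r v ↔ Reach (Φ x)) := by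
        intro x hx
        rw [mem_ballIn_iff L Set.univ r hx hv]
        constructor
        · rintro ⟨u, hu, a, b, hab, hprof, w, hwl, -⟩
          exact ⟨u, hu, a, b, hab, by simpa [hΦ, hu] using hprof, w, hwl⟩
        · rintro ⟨u, hu, a, b, hab, hprof, w, hwl⟩
          exact ⟨u, hu, a, b, hab, by simpa [hΦ, hu] using hprof, w, hwl,
            fun y _ => Set.mem_univ y⟩
      have T3 : ∀ (ν : V → ℕ∞) (x : V), x ∈ S → x ∉ L →
          (∀ u ∈ L, profileIn G S L r x u = ν u) → (Reach ν ↔ x ∈ ballIn G S r v) := by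
        intro ν x hxS hxL hxν
        rw [mem_ballIn_iff L S r hxL hv]
        constructor
        · rintro ⟨u, hu, a, b, hab, hprof, w, hwl⟩
          obtain ⟨w', hwl', hwS'⟩ := (h1 u hu v hv b (by omega)).mp ⟨w, hwl⟩
          exact ⟨u, hu, a, b, hab, by rw [hxν u hu]; exact hprof, w', hwl', hwS'⟩
        · rintro ⟨u, hu, a, b, hab, hprof, w, hwl, -⟩
          exact ⟨u, hu, a, b, hab, by rw [← hxν u hu]; exact hprof, w, hwl⟩
      set Bg : Finset V := Df.filter (fun y => y ∈ ballIn G Set.univ r v) with hBgdef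
      have hvD : c ≤ Bg.card := by
        have he : ballIn G Set.univ r v ∩ D = (Bg : Set V) := by
          ext z
          simp only [Set.mem_inter_iff, hBgdef, Finset.coe_filter, Set.mem_setOf_eq,
            hDfdef, Set.Finite.mem_toFinset]
          tauto
        have := hDdom v
        rwa [he, Set.ncard_coe_finset] at this
      set Good : Finset (V → ℕ∞) := Profs.filter Reach with hGooddef
      have hsplit : Bg.filter (fun y => ¬ y ∈ L) = Good.biUnion P := by
        ext z
        constructor
        · intro hz
          obtain ⟨hzBg, hzL⟩ := Finset.mem_filter.mp hz
          obtain ⟨hzDf, hzball⟩ := Finset.mem_filter.mp hzBg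
          have hzA : z ∈ A := Finset.mem_filter.mpr ⟨hzDf, hzL⟩
          exact Finset.mem_biUnion.mpr ⟨Φ z,
            Finset.mem_filter.mpr ⟨Finset.mem_image_of_mem Φ hzA, (T2 z hzL).mp hzball⟩,
            Finset.mem_filter.mpr ⟨hzA, rfl⟩⟩
        · intro hz
          obtain ⟨ν, hνG, hzP⟩ := Finset.mem_biUnion.mp hz
          obtain ⟨hzA, hzΦ⟩ := Finset.mem_filter.mp hzP
          obtain ⟨hzDf, hzL⟩ := Finset.mem_filter.mp hzA
          have hνR := (Finset.mem_filter.mp hνG).2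
          exact Finset.mem_filter.mpr
            ⟨Finset.mem_filter.mpr ⟨hzDf, (T2 z hzL).mpr (hzΦ ▸ hνR)⟩, hzL⟩
      have hPdisj : ∀ ν ∈ Good, ∀ ν' ∈ Good, ν ≠ ν' → Disjoint (P ν) (P ν') := by
        intro ν _ ν' _ hne
        rw [Finset.disjoint_left]
        intro z hz hz'
        exact hne (((Finset.mem_filter.mp hz).2).symm.trans (Finset.mem_filter.mp hz').2)
      have hcount : c ≤ (Bg.filter (fun y => y ∈ L)).card + ∑ ν ∈ Good, (P ν).card := by
        have h5 : (Bg.filter (fun y => y ∈ L)).card + (Bg.filter (fun y => ¬ y ∈ L)).card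
            = Bg.card := Finset.card_filter_add_card_filter_not _
        rw [hsplit, Finset.card_biUnion hPdisj] at h5
        omega
      set T : Finset V := Bg.filter (fun y => y ∈ L) ∪ Good.biUnion Pick with hTdef
      have hTsub : (T : Set V) ⊆ ballIn G S r v ∩ (Dhat : Set V) := by
        intro z hz
        rcases Finset.mem_union.mp (Finset.mem_coe.mp hz) with hz' | hz'
        · obtain ⟨hzBg, hzL⟩ := Finset.mem_filter.mp hz'
          obtain ⟨hzDf, hzball⟩ := Finset.mem_filter.mp hzBg
          refine ⟨T1 z hzL hzball, ?_⟩
          exact Finset.mem_coe.mpr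
            (Finset.mem_union_left _ (Finset.mem_filter.mpr ⟨hzDf, hzL⟩))
        · obtain ⟨ν, hνG, hzν⟩ := Finset.mem_biUnion.mp hz'
          obtain ⟨hνP, hνR⟩ := Finset.mem_filter.mp hνG
          obtain ⟨hzS, hzL, hzprof⟩ := hPickK ν hzν
          refine ⟨(T3 ν z hzS hzL hzprof).mp hνR, ?_⟩
          exact Finset.mem_coe.mpr
            (Finset.mem_union_right _ (Finset.mem_biUnion.mpr ⟨ν, hνP, hzν⟩))
      have hTcard : T.card = (Bg.filter (fun y => y ∈ L)).card + ∑ ν ∈ Good, (Pick ν).card := by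
        rw [hTdef, Finset.card_union_of_disjoint, Finset.card_biUnion]
        · intro ν hν ν' hν' hne
          exact hKdisj ν (Finset.mem_filter.mp hν).1 ν' (Finset.mem_filter.mp hν').1 hne
        · rw [Finset.disjoint_left]
          intro z hz hz'
          obtain ⟨ν, -, hzν⟩ := Finset.mem_biUnion.mp hz'
          exact hPickL ν z hzν (Finset.mem_filter.mp hz).2
      have hcT : c ≤ T.card := by
        by_cases hbig : ∃ ν ∈ Good, c ≤ (P ν).card
        · obtain ⟨ν, hνG, hν⟩ := hbig
          have h6 : (Pick ν).card = c := by
            rw [hPickCard]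
            exact min_eq_left hν
          have h7 : (Pick ν).card ≤ ∑ ν' ∈ Good, (Pick ν').card :=
            Finset.single_le_sum (f := fun ν' => (Pick ν').card)
              (fun _ _ => Nat.zero_le _) hνG
          omega
        · push_neg at hbig
          have h8 : ∑ ν ∈ Good, (Pick ν).card = ∑ ν ∈ Good, (P ν).card := by
            apply Finset.sum_congr rfl
            intro ν hν
            rw [hPickCard]
            exact min_eq_right (le_of_lt (hbig ν hν))
          omega
      calc c ≤ T.card := hcT
        _ = (T : Set V).ncard := (Set.ncard_coe_finset T).symm
        _ ≤ (ballIn G S r v ∩ (Dhat : Set V)).ncard :=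
            Set.ncard_le_ncard hTsub (Set.toFinite _)
  · rintro ⟨D, hDS, hDk, hDdom⟩
    refine ⟨D, hDk, hcore D ?_⟩
    intro v hv
    refine le_trans (hDdom v hv) (Set.ncard_le_ncard ?_ (Set.toFinite _))
    rintro z ⟨⟨w, hl, -⟩, hzD⟩
    exact ⟨⟨w, hl, fun _ _ => Set.mem_univ _⟩, hzD⟩
end

section
/- Let G be a finite simple graph, r, c, k natural numbers with c ≥ 1, and U ⊆ V(G) a solution core for (r,c)-scattering, i.e. some maximum-size (r,c)-scattered set of G is contained in U. Let Ĝ be an induced subgraph of G with U ⊆ V(Ĝ) such that: (1) for all u, v ∈ U and all d ≤ r, u is within distance d of v in G if and only if u is within distance d of v in Ĝ; and (2) for every function ν : U → {1,…,r} ∪ {∞} realized as π^r_{G,U}[x] by some vertex x ∈ V(G) ∖ U, there is a vertex x' ∈ V(Ĝ) ∖ U with π^r_{Ĝ,U}[x'] = ν. Then G has an (r,c)-scattered set of size at least k if and only if there is a set I ⊆ U of size at least k with |N^r_{Ĝ}[v] ∩ I| ≤ c for every vertex v of Ĝ. -/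
lemma profileIn_eq {V : Type*} (G : SimpleGraph V) (S X : Set V) (r : ℕ) (u v : V) :
    profileIn G S X r u v =
      if sInf {n : ℕ∞ | ∃ w : G.Walk u v, (∀ x ∈ w.support, x ∈ S) ∧
          (∀ x ∈ w.support.tail.dropLast, x ∉ X) ∧ (w.length : ℕ∞) = n} ≤ (r : ℕ∞) then
        sInf {n : ℕ∞ | ∃ w : G.Walk u v, (∀ x ∈ w.support, x ∈ S) ∧
          (∀ x ∈ w.support.tail.dropLast, x ∉ X) ∧ (w.length : ℕ∞) = n}
      else ⊤ := rfl

lemma profileIn_le_of_walk {V : Type*} (G : SimpleGraph V) (S X : Set V) (r : ℕ)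
    {u v : V} (w : G.Walk u v) (hS : ∀ x ∈ w.support, x ∈ S)
    (hX : ∀ x ∈ w.support.tail.dropLast, x ∉ X) (hlen : w.length ≤ r) :
    profileIn G S X r u v ≤ (w.length : ℕ∞) := by
  have hmem : (w.length : ℕ∞) ∈ {n : ℕ∞ | ∃ w' : G.Walk u v, (∀ x ∈ w'.support, x ∈ S) ∧
      (∀ x ∈ w'.support.tail.dropLast, x ∉ X) ∧ ((w'.length : ℕ∞) = n)} := ⟨w, hS, hX, rfl⟩
  have hd := sInf_le hmem
  rw [profileIn_eq, if_pos (hd.trans (by exact_mod_cast hlen))]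
  exact hd

lemma walk_of_profileIn_le {V : Type*} (G : SimpleGraph V) (S X : Set V) (r m : ℕ)
    {u v : V} (h : profileIn G S X r u v ≤ (m : ℕ∞)) :
    ∃ w : G.Walk u v, (∀ x ∈ w.support, x ∈ S) ∧ w.length ≤ m := by
  rw [profileIn_eq] at h
  split_ifs at h with hd
  · have hlt : sInf {n : ℕ∞ | ∃ w : G.Walk u v, (∀ x ∈ w.support, x ∈ S) ∧
        (∀ x ∈ w.support.tail.dropLast, x ∉ X) ∧ ((w.length : ℕ∞) = n)} < ((m + 1 : ℕ) : ℕ∞) := by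
      refine lt_of_le_of_lt h ?_
      exact_mod_cast Nat.lt_succ_self m
    obtain ⟨n, ⟨w, hwS, -, hwn⟩, hn⟩ := sInf_lt_iff.mp hlt
    rw [← hwn] at hn
    exact ⟨w, hwS, by exact_mod_cast Nat.lt_succ_iff.mp (by exact_mod_cast hn)⟩
  · exact absurd (top_le_iff.mp h) (by simp)

lemma tail_dropLast_subset {α : Type*} : ∀ (l : List α), l.tail.dropLast ⊆ l.dropLast
  | [] => by simp
  | [a] => by simp
  | a :: b :: l => by
      rw [List.dropLast_cons₂]
      exact fun x hx => List.mem_cons_of_mem _ hx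

lemma walk_split_s13 {V : Type*} {G : SimpleGraph V} (U : Set V) :
    ∀ {a b : V} (w : G.Walk a b), b ∈ U → a ∉ U →
      ∃ u₁ ∈ U, ∃ (p : G.Walk a u₁) (q : G.Walk u₁ b),
        p.length + q.length = w.length ∧ ∀ x ∈ p.support.dropLast, x ∉ U := by
  intro a b w
  induction w with
  | nil => intro hb ha; exact absurd hb ha
  | @cons a a' b hadj w' ih =>
    intro hb ha
    by_cases h : a' ∈ U
    · refine ⟨a', h, SimpleGraph.Walk.cons hadj SimpleGraph.Walk.nil, w', by simp [Nat.add_comm], ?_⟩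
      intro x hx
      simp at hx
      subst hx; exact ha
    · obtain ⟨u₁, hu₁, p, q, hlen, hav⟩ := ih hb h
      refine ⟨u₁, hu₁, SimpleGraph.Walk.cons hadj p, q, by simp [← hlen]; ring, ?_⟩
      intro x hx
      rw [SimpleGraph.Walk.support_cons] at hx
      obtain ⟨c, l, hl⟩ : ∃ c l, p.support = c :: l := ⟨_, _, p.support_eq_cons⟩
      rw [hl, List.dropLast_cons₂, List.mem_cons] at hx
      rcases hx with rfl | hx
      · exact ha
      · exact hav x (by rw [hl]; exact hx)

/-- Let `U` be a solution core for `(r,c)`-scattering in `G` (some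
maximum-size `(r,c)`-scattered set of `G` lies inside `U`) and let `Ĝ` be the subgraph
of `G` induced on `S ⊇ U` such that (1) distances up to `r` between vertices of `U`
agree in `G` and `Ĝ`, and (2) every `r`-projection profile onto `U` realized in `G` by
some vertex of `V(G) ∖ U` is realized in `Ĝ` by some vertex of `V(Ĝ) ∖ U`.  Then `G`
has an `(r,c)`-scattered set of size at least `k` iff there is `I ⊆ U` of size at
least `k` with `|N^r_Ĝ[v] ∩ I| ≤ c` for every vertex `v` of `Ĝ`. -/
theorem rc_scattered_projection_kernel {V : Type*} [Fintype V]
    (G : SimpleGraph V) (r c k : ℕ) (hc : 1 ≤ c) (U S : Set V) (hUS : U ⊆ S)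
    (hcore : ∃ I₀ : Set V, I₀ ⊆ U ∧
      (∀ v : V, (ballIn G Set.univ r v ∩ I₀).ncard ≤ c) ∧
      (∀ I : Set V, (∀ v : V, (ballIn G Set.univ r v ∩ I).ncard ≤ c) →
        I.ncard ≤ I₀.ncard))
    (h1 : ∀ u ∈ U, ∀ v ∈ U, ∀ d ≤ r,
      ((∃ w : G.Walk u v, w.length ≤ d) ↔
       (∃ w : G.Walk u v, w.length ≤ d ∧ ∀ x ∈ w.support, x ∈ S)))
    (h2 : ∀ x : V, x ∉ U → ∃ x' ∈ S, x' ∉ U ∧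
      ∀ v ∈ U, profileIn G S U r x' v = profileIn G Set.univ U r x v) :
    (∃ I : Set V, k ≤ I.ncard ∧
        ∀ v : V, (ballIn G Set.univ r v ∩ I).ncard ≤ c) ↔
    (∃ I : Set V, I ⊆ U ∧ k ≤ I.ncard ∧
        ∀ v ∈ S, (ballIn G S r v ∩ I).ncard ≤ c) := by
  constructor
  · rintro ⟨I, hk, hI⟩
    obtain ⟨I₀, hI₀U, hI₀sc, hmax⟩ := hcore
    refine ⟨I₀, hI₀U, hk.trans (hmax I hI), fun v _ => ?_⟩
    refine le_trans (Set.ncard_le_ncard ?_ (Set.toFinite _)) (hI₀sc v)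
    exact Set.inter_subset_inter_left _ (fun u ⟨w, hw, hS⟩ => ⟨w, hw, fun x _ => trivial⟩)
  · rintro ⟨I, hIU, hk, hI⟩
    refine ⟨I, hk, fun v => ?_⟩
    by_cases hv : v ∈ U
    · refine le_trans (Set.ncard_le_ncard ?_ (Set.toFinite _)) (hI v (hUS hv))
      rintro u ⟨⟨w, hwlen, -⟩, huI⟩
      obtain ⟨w', hw'len, hw'S⟩ := (h1 u (hIU huI) v hv r le_rfl).mp ⟨w, hwlen⟩
      exact ⟨⟨w', hw'len, hw'S⟩, huI⟩
    · obtain ⟨x', hx'S, hx'U, hx'⟩ := h2 v hv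
      refine le_trans (Set.ncard_le_ncard ?_ (Set.toFinite _)) (hI x' hx'S)
      rintro u ⟨⟨w, hwlen, -⟩, huI⟩
      have hu : u ∈ U := hIU huI
      obtain ⟨u₁, hu₁, p, q, hsum, hpav⟩ := walk_split_s13 U w.reverse hu hv
      rw [SimpleGraph.Walk.length_reverse] at hsum
      -- internal vertices of p avoid U
      have hpint : ∀ x ∈ p.support.tail.dropLast, x ∉ U := fun x hx =>
        hpav x (tail_dropLast_subset _ hx)
      have hplen : p.length ≤ r := by omega
      have hp1 : profileIn G Set.univ U r v u₁ ≤ (p.length : ℕ∞) :=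
        profileIn_le_of_walk G Set.univ U r p (fun x _ => trivial) hpint hplen
      rw [← hx' u₁ hu₁] at hp1
      obtain ⟨p', hp'S, hp'len⟩ := walk_of_profileIn_le G S U r p.length hp1
      obtain ⟨q', hq'len, hq'S⟩ :=
        (h1 u₁ hu₁ u hu (r - p.length) (Nat.sub_le _ _)).mp ⟨q, by omega⟩
      refine ⟨⟨(q'.reverse.append p'.reverse), ?_, ?_⟩, huI⟩
      · simp only [SimpleGraph.Walk.length_append, SimpleGraph.Walk.length_reverse]
        omega
      · intro x hx
        rw [SimpleGraph.Walk.mem_support_append_iff] at hx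
        rcases hx with hx | hx
        · exact hq'S x (by simpa using hx)
        · exact hp'S x (by simpa using hx)
end
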